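/- Let ρ be an n×n density matrix with eigenvalues λ_1,…,λ_n and let U be an n×n unitary with unitary channel 𝒰(a) = U a U†. Then the multiset of eigenvalues of the pseudo-density matrix R = (1/2){ρ ⊗ 𝟙, 𝒥[𝒰]}, where 𝒥[𝒰] = Σ_{i,j} |i⟩⟨j| ⊗ U|j⟩⟨i|U†, equals the multiset {λ_1,…,λ_n} ∪ {±(λ_i+λ_j)/2 : 1 ≤ i < j ≤ n}. -/

import Mathlib

open Kronecker Matrix ComplexOrder

/-- Jamiołkowski matrix `𝒥[𝒩] = ∑ᵢⱼ |i⟩⟨j| ⊗ 𝒩(|j⟩⟨i|)` of a map `𝒩`. -/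
noncomputable def jam {n m : Type*} [Fintype n] [DecidableEq n]
    (𝒩 : Matrix n n ℂ → Matrix m m ℂ) : Matrix (n × m) (n × m) ℂ :=
  ∑ i : n, ∑ j : n, Matrix.single i j (1 : ℂ) ⊗ₖ 𝒩 (Matrix.single j i 1)

/-- The pseudo-density matrix (spatiotemporal product)
`𝒩 ⋆ ρ = (1/2){ρ ⊗ 𝟙, 𝒥[𝒩]}`. -/
noncomputable def pdm {n m : Type*} [Fintype n] [DecidableEq n] [Fintype m] [DecidableEq m]
    (𝒩 : Matrix n n ℂ → Matrix m m ℂ) (ρ : Matrix n n ℂ) : Matrix (n × m) (n × m) ℂ :=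
  (1 / 2 : ℂ) • ((ρ ⊗ₖ (1 : Matrix m m ℂ)) * jam 𝒩 + jam 𝒩 * (ρ ⊗ₖ (1 : Matrix m m ℂ)))

namespace PdmAux

open Polynomial

/-! ### The swap matrix and its properties -/

def swm (N : ℕ) : Matrix (Fin N × Fin N) (Fin N × Fin N) ℂ :=
  Matrix.of fun p q => if p = (q.2, q.1) then 1 else 0

lemma swm_mul {N : ℕ} (M : Matrix (Fin N × Fin N) (Fin N × Fin N) ℂ) :
    swm N * M = Matrix.of fun p q => M (p.2, p.1) q := by
  ext p q
  rw [Matrix.mul_apply, Finset.sum_eq_single (p.2, p.1)]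
  · simp [swm]
  · intro b _ hb
    have : ¬ p = (b.2, b.1) := fun h => hb (by simp [h])
    simp [swm, this]
  · simp

lemma mul_swm {N : ℕ} (M : Matrix (Fin N × Fin N) (Fin N × Fin N) ℂ) :
    M * swm N = Matrix.of fun p q => M p (q.2, q.1) := by
  ext p q
  rw [Matrix.mul_apply, Finset.sum_eq_single (q.2, q.1)]
  · simp [swm]
  · intro b _ hb; simp [swm, hb]
  · simp

lemma swm_mul_swm {N : ℕ} : swm N * swm N = 1 := by
  rw [swm_mul]
  ext p q
  simp [swm, Matrix.one_apply, Prod.ext_iff, and_comm]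

lemma swm_mul_diagonal {N : ℕ} (f : Fin N × Fin N → ℂ) :
    swm N * Matrix.diagonal f = Matrix.diagonal (fun p => f (p.2, p.1)) * swm N := by
  rw [swm_mul]
  ext p q
  by_cases h : p = (q.2, q.1)
  · subst h
    simp [swm, Matrix.diagonal_apply, Matrix.diagonal_mul]
  · have h2 : ¬ (p.2, p.1) = q := fun hh => h (by simp [← hh])
    simp [swm, Matrix.diagonal_apply, Matrix.diagonal_mul, h, h2]

lemma kron_mul_swm {N : ℕ} (A B : Matrix (Fin N) (Fin N) ℂ) :
    (A ⊗ₖ B) * swm N = swm N * (B ⊗ₖ A) := by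
  rw [mul_swm, swm_mul]
  ext p q
  simp [Matrix.kroneckerMap_apply, mul_comm]

lemma conjTranspose_kron {N : ℕ} (A B : Matrix (Fin N) (Fin N) ℂ) :
    (A ⊗ₖ B)ᴴ = Aᴴ ⊗ₖ Bᴴ := by
  ext p q
  simp [Matrix.conjTranspose_apply, Matrix.kroneckerMap_apply]

lemma jam_eq {N : ℕ} (U : Matrix (Fin N) (Fin N) ℂ) :
    jam (fun X => U * X * Uᴴ) = swm N * (U ⊗ₖ Uᴴ) := by
  ext p q
  have hs : (swm N * (U ⊗ₖ Uᴴ)) p q = U p.2 q.1 * Uᴴ p.1 q.2 := by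
    rw [Matrix.mul_apply, Finset.sum_eq_single (p.2, p.1)]
    · simp [swm, Matrix.kroneckerMap_apply]
    · intro b _ hb
      have : ¬ p = (b.2, b.1) := fun h => hb (by simp [h])
      simp [swm, this]
    · simp
  rw [hs]
  simp only [jam, Matrix.sum_apply, Matrix.kroneckerMap_apply]
  have hmul : ∀ i j : Fin N,
      ((U * Matrix.single j i (1:ℂ) * Uᴴ) : Matrix (Fin N) (Fin N) ℂ) p.2 q.2
        = U p.2 j * Uᴴ i q.2 := by
    intro i j
    simp only [Matrix.mul_apply]
    simp [Matrix.single, Matrix.of_apply, ite_and, Finset.sum_ite_eq,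
      Finset.sum_ite_eq', Finset.mul_sum, Finset.sum_mul]
  simp only [hmul]
  simp [Matrix.single, Matrix.of_apply, ite_and, Finset.sum_ite_eq]

/-! ### Characteristic polynomial tools -/

lemma charpoly_diagonal' {n : Type*} [Fintype n] [DecidableEq n] (d : n → ℂ) :
    (Matrix.diagonal d).charpoly = ∏ i, (X - C (d i)) := by
  have h : charmatrix (Matrix.diagonal d) = Matrix.diagonal (fun i => X - C (d i)) := by
    ext i j
    by_cases h : i = j
    · subst h; simp
    · simp [h, Matrix.diagonal_apply_ne _ h]
  rw [Matrix.charpoly, h, Matrix.det_diagonal]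

lemma charpoly_conj' {n : Type*} [Fintype n] [DecidableEq n] (P Q A : Matrix n n ℂ)
    (h1 : P * Q = 1) (h2 : Q * P = 1) : (P * A * Q).charpoly = A.charpoly := by
  have key : charmatrix (P * A * Q)
      = P.map C * charmatrix A * Q.map C := by
    unfold charmatrix
    rw [mul_sub, sub_mul]
    congr 1
    · have hP : P.map (C : ℂ →+* ℂ[X]) * Matrix.scalar n (X : ℂ[X])
          = Matrix.scalar n (X : ℂ[X]) * P.map C :=
        (Matrix.scalar_commute (X : ℂ[X]) (fun r' => Commute.all _ _) (P.map C)).symm.eq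
      rw [hP, mul_assoc, ← Matrix.map_mul, h1, Matrix.map_one _ (map_zero _) (map_one _), mul_one]
    · simp only [RingHom.mapMatrix_apply]
      rw [← Matrix.map_mul, ← Matrix.map_mul]
  rw [Matrix.charpoly, key, Matrix.det_mul, Matrix.det_mul, mul_right_comm,
    ← Matrix.det_mul, ← Matrix.map_mul, h1, Matrix.map_one _ (map_zero _) (map_one _),
    Matrix.det_one, one_mul, Matrix.charpoly]

lemma charpoly_eq_prod_eigenvalues {n : Type*} [Fintype n] [DecidableEq n]
    {A : Matrix n n ℂ} (hA : A.IsHermitian) :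
    A.charpoly = ∏ i, (X - C ((hA.eigenvalues i : ℝ) : ℂ)) := by
  conv_lhs => rw [hA.spectral_theorem]
  rw [Unitary.conjStarAlgAut_apply, Matrix.star_eq_conjTranspose]
  rw [charpoly_conj' _ _ _ ?h1 ?h2, charpoly_diagonal']
  case h1 =>
    have := (Matrix.mem_unitaryGroup_iff).mp (hA.eigenvectorUnitary).2
    simpa [Matrix.star_eq_conjTranspose] using this
  case h2 =>
    have := (Matrix.mem_unitaryGroup_iff').mp (hA.eigenvectorUnitary).2
    simpa [Matrix.star_eq_conjTranspose] using this
  rfl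

lemma eig_multiset_eq {n : Type*} [Fintype n] [DecidableEq n]
    {A : Matrix n n ℂ} (hA : A.IsHermitian) (g : n → ℝ)
    (h : A.charpoly = ∏ i, (X - C ((g i : ℝ) : ℂ))) :
    Multiset.map hA.eigenvalues Finset.univ.val = Multiset.map g Finset.univ.val := by
  have h0 : (∏ i, (X - C ((hA.eigenvalues i : ℝ) : ℂ)))
      = ∏ i, (X - C ((g i : ℝ) : ℂ)) := (charpoly_eq_prod_eigenvalues hA).symm.trans h
  have conv : ∀ c : n → ℂ, (∏ i, (X - C (c i)))
      = (Multiset.map (fun a : ℂ => X - C a) (Multiset.map c Finset.univ.val)).prod := by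
    intro c
    rw [Finset.prod_eq_multiset_prod, Multiset.map_map]
    rfl
  rw [conv, conv] at h0
  have h1 := congrArg Polynomial.roots h0
  rw [Polynomial.roots_multiset_prod_X_sub_C, Polynomial.roots_multiset_prod_X_sub_C] at h1
  have h2 : Multiset.map (Complex.ofReal) (Multiset.map hA.eigenvalues Finset.univ.val)
      = Multiset.map (Complex.ofReal) (Multiset.map g Finset.univ.val) := by
    rw [Multiset.map_map, Multiset.map_map]
    exact h1
  exact Multiset.map_injective Complex.ofReal_injective h2

/-! ### Signs, the change-of-basis `Pm` and its inverse `Qm` -/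

def sgn (N : ℕ) : Fin N × Fin N → ℂ :=
  fun q => if q.1 = q.2 then 0 else if q.1 < q.2 then 1 else -1

lemma sgn_swap {N : ℕ} (q : Fin N × Fin N) : sgn N (q.2, q.1) = - sgn N q := by
  rcases lt_trichotomy q.1 q.2 with h | h | h
  · simp [sgn, h, h.ne, h.ne', asymm h]
  · simp [sgn, h]
  · simp [sgn, h, h.ne, h.ne', asymm h]

lemma sgn_cube {N : ℕ} (q : Fin N × Fin N) : sgn N q * (sgn N q * sgn N q) = sgn N q := by
  rcases lt_trichotomy q.1 q.2 with h | h | h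
  · simp [sgn, h, h.ne, h.ne', asymm h]
  · simp [sgn, h]
  · simp [sgn, h, h.ne, h.ne', asymm h]

noncomputable def Pm (N : ℕ) : Matrix (Fin N × Fin N) (Fin N × Fin N) ℂ :=
  1 + swm N * Matrix.diagonal (sgn N)

noncomputable def Em (N : ℕ) : Matrix (Fin N × Fin N) (Fin N × Fin N) ℂ :=
  Matrix.diagonal (fun q => sgn N q * sgn N q)

noncomputable def Qm (N : ℕ) : Matrix (Fin N × Fin N) (Fin N × Fin N) ℂ :=
  1 - (1/2 : ℂ) • (Em N + swm N * Matrix.diagonal (sgn N))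

lemma diag_sgn_mul_swm {N : ℕ} :
    Matrix.diagonal (sgn N) * swm N = swm N * Matrix.diagonal (fun q => - sgn N q) := by
  rw [swm_mul_diagonal]
  have h : (fun p : Fin N × Fin N => - sgn N (p.2, p.1)) = sgn N :=
    funext fun q => by rw [sgn_swap]; ring
  rw [h]

lemma A_mul_A {N : ℕ} :
    (swm N * Matrix.diagonal (sgn N)) * (swm N * Matrix.diagonal (sgn N)) = - Em N := by
  have h : (swm N * Matrix.diagonal (sgn N)) * (swm N * Matrix.diagonal (sgn N))
      = swm N * (Matrix.diagonal (sgn N) * swm N) * Matrix.diagonal (sgn N) := by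
    rw [mul_assoc, mul_assoc, mul_assoc]
  rw [h, diag_sgn_mul_swm, ← mul_assoc, swm_mul_swm, one_mul,
    Matrix.diagonal_mul_diagonal, Em]
  ext p q
  by_cases hpq : p = q
  · subst hpq; simp [Matrix.diagonal_apply]
  · simp [Matrix.diagonal_apply_ne _ hpq, Matrix.diagonal_apply_ne, hpq]

lemma A_mul_E {N : ℕ} :
    (swm N * Matrix.diagonal (sgn N)) * Em N = swm N * Matrix.diagonal (sgn N) := by
  rw [Em, mul_assoc, Matrix.diagonal_mul_diagonal]
  have h : (fun q : Fin N × Fin N => sgn N q * (sgn N q * sgn N q)) = sgn N :=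
    funext fun q => sgn_cube q
  rw [h]

lemma E_mul_A {N : ℕ} :
    Em N * (swm N * Matrix.diagonal (sgn N)) = swm N * Matrix.diagonal (sgn N) := by
  rw [Em, ← mul_assoc, ← swm_mul_diagonal (fun q => sgn N (q.2,q.1) * sgn N (q.2,q.1)), mul_assoc,
    Matrix.diagonal_mul_diagonal]
  have h : (fun q : Fin N × Fin N => sgn N (q.2,q.1) * sgn N (q.2,q.1) * sgn N q) = sgn N :=
    funext fun q => by
      rw [sgn_swap, mul_assoc,
        show -sgn N q * (-sgn N q * sgn N q) = sgn N q * (sgn N q * sgn N q) by ring, sgn_cube]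
  rw [h]

lemma Pm_mul_Qm {N : ℕ} : Pm N * Qm N = 1 := by
  set A := swm N * Matrix.diagonal (sgn N) with hA
  have h1 : Pm N * (Em N + A) = A + A := by
    rw [Pm, add_mul, one_mul, mul_add, A_mul_E, A_mul_A]
    abel
  rw [Qm, mul_sub, mul_one, mul_smul_comm, h1, Pm, smul_add]
  have h2 : (1/2 : ℂ) • A + (1/2 : ℂ) • A = A := by
    rw [← add_smul]; norm_num
  rw [h2]
  abel

lemma Qm_mul_Pm {N : ℕ} : Qm N * Pm N = 1 := mul_eq_one_comm.mp Pm_mul_Qm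

/-! ### The diagonalizing identity -/

noncomputable def dval {N : ℕ} (f : Fin N → ℝ) : Fin N × Fin N → ℝ :=
  fun q => (if q.2 < q.1 then -1 else 1) * ((f q.1 + f q.2) / 2)

lemma Pm_apply {N : ℕ} (p q : Fin N × Fin N) :
    Pm N p q = (if p = q then 1 else 0) + (if p = (q.2, q.1) then sgn N q else 0) := by
  simp [Pm, Matrix.add_apply, Matrix.one_apply, Matrix.mul_diagonal, swm, ite_mul]

lemma MP {N : ℕ} (f : Fin N → ℝ) :
    Matrix.diagonal (fun p : Fin N × Fin N => (((f p.1 + f p.2) / 2 : ℝ) : ℂ)) * swm N * Pm N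
      = Pm N * Matrix.diagonal (fun q => ((dval f q : ℝ) : ℂ)) := by
  rw [mul_assoc, swm_mul]
  ext p q
  rw [Matrix.diagonal_mul, Matrix.mul_diagonal, Matrix.of_apply, Pm_apply, Pm_apply]
  have hswap : ((p.2, p.1) = (q.2, q.1)) ↔ p = q := by
    simp [Prod.ext_iff, and_comm]
  have hswap2 : ((p.2, p.1) = q) ↔ p = (q.2, q.1) := by
    simp [Prod.ext_iff, and_comm]
  simp only [hswap, hswap2]
  by_cases h1 : p = q
  · subst h1
    by_cases h2 : p = (p.2, p.1)
    · have hd : p.1 = p.2 := congrArg Prod.fst h2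
      simp only [if_pos rfl, if_pos h2, sgn, dval, if_pos hd,
        if_neg (show ¬ p.2 < p.1 from fun hlt => ne_of_gt hlt hd)]
      push_cast
      ring
    · simp only [if_pos rfl, if_neg h2]
      have hne : p.1 ≠ p.2 := fun h => h2 (Prod.ext_iff.mpr ⟨h, h.symm⟩)
      rcases lt_or_gt_of_ne hne with h | h
      · simp only [sgn, dval, if_neg hne, if_pos h, if_neg (asymm h)]
        push_cast
        ring
      · simp only [sgn, dval, if_neg hne, if_neg (not_lt_of_gt h), if_pos h]
        push_cast
        ring
  · by_cases h2 : p = (q.2, q.1)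
    · have hq : q ≠ (q.2, q.1) := fun h => h1 (h2.trans h.symm)
      have hqd : q.1 ≠ q.2 := fun h => hq (Prod.ext_iff.mpr ⟨h, h.symm⟩)
      simp only [if_neg h1, if_pos h2, h2]
      rcases lt_or_gt_of_ne hqd with h | h
      · simp only [sgn, dval, if_neg hqd, if_pos h, if_neg (asymm h), if_neg (Ne.symm hq)]
        push_cast
        ring
      · simp only [sgn, dval, if_neg hqd, if_neg (not_lt_of_gt h), if_pos h,
          if_neg (Ne.symm hq)]
        push_cast
        ring
    · simp [h1, h2]

/-! ### Multiset bookkeeping -/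

lemma multiset_split {N : ℕ} (f : Fin N → ℝ) :
    Multiset.map (dval f) Finset.univ.val =
      Multiset.map f Finset.univ.val
      + Multiset.map (fun q : Fin N × Fin N => (f q.1 + f q.2) / 2)
          (Finset.univ.filter fun q : Fin N × Fin N => q.1 < q.2).val
      + Multiset.map (fun q : Fin N × Fin N => -((f q.1 + f q.2) / 2))
          (Finset.univ.filter fun q : Fin N × Fin N => q.1 < q.2).val := by
  set u := (Finset.univ : Finset (Fin N × Fin N)).val with hu
  have e1 : Multiset.filter (fun q : Fin N × Fin N => q.1 = q.2) u
      + Multiset.filter (fun q : Fin N × Fin N => ¬ q.1 = q.2) u = u :=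
    Multiset.filter_add_not _ u
  have e2 : Multiset.filter (fun q : Fin N × Fin N => q.1 < q.2) u
      + Multiset.filter (fun q : Fin N × Fin N => q.2 < q.1) u
      = Multiset.filter (fun q : Fin N × Fin N => ¬ q.1 = q.2) u := by
    have e3 := Multiset.filter_add_not (fun q : Fin N × Fin N => q.1 < q.2)
      (Multiset.filter (fun q : Fin N × Fin N => ¬ q.1 = q.2) u)
    rw [Multiset.filter_filter, Multiset.filter_filter] at e3
    have c1 : Multiset.filter (fun q : Fin N × Fin N => q.1 < q.2 ∧ ¬ q.1 = q.2) u
        = Multiset.filter (fun q : Fin N × Fin N => q.1 < q.2) u :=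
      Multiset.filter_congr fun q _ => ⟨fun h => h.1, fun h => ⟨h, ne_of_lt h⟩⟩
    have c2 : Multiset.filter (fun q : Fin N × Fin N => ¬ q.1 < q.2 ∧ ¬ q.1 = q.2) u
        = Multiset.filter (fun q : Fin N × Fin N => q.2 < q.1) u :=
      Multiset.filter_congr fun q _ =>
        ⟨fun h => lt_of_le_of_ne (not_lt.mp h.1) (Ne.symm h.2),
         fun h => ⟨not_lt_of_gt h, Ne.symm (ne_of_lt h)⟩⟩
    rw [c1, c2] at e3
    exact e3
  have hA : Multiset.map (dval f) (Multiset.filter (fun q : Fin N × Fin N => q.1 = q.2) u)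
      = Multiset.map f Finset.univ.val := by
    have emb1 : Finset.map ⟨fun k : Fin N => (k, k), fun a b h => (Prod.ext_iff.mp h).1⟩
        Finset.univ = Finset.univ.filter fun q : Fin N × Fin N => q.1 = q.2 := by
      ext q
      simp only [Finset.mem_map, Finset.mem_filter, Finset.mem_univ, true_and,
        Function.Embedding.coeFn_mk]
      constructor
      · rintro ⟨k, _, rfl⟩; rfl
      · intro h; exact ⟨q.1, Prod.ext_iff.mpr ⟨rfl, h⟩⟩
    have hv : (Finset.univ.filter fun q : Fin N × Fin N => q.1 = q.2).val
        = Multiset.filter (fun q : Fin N × Fin N => q.1 = q.2) u := Finset.filter_val _ _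
    rw [← hv, ← emb1, Finset.map_val, Multiset.map_map]
    refine Multiset.map_congr rfl fun k _ => ?_
    show dval f (k, k) = f k
    simp [dval, add_self_div_two]
  have hB : Multiset.map (dval f) (Multiset.filter (fun q : Fin N × Fin N => q.1 < q.2) u)
      = Multiset.map (fun q : Fin N × Fin N => (f q.1 + f q.2) / 2)
          (Finset.univ.filter fun q : Fin N × Fin N => q.1 < q.2).val := by
    rw [Finset.filter_val]
    refine Multiset.map_congr rfl fun q hq => ?_
    have h : q.1 < q.2 := (Multiset.mem_filter.mp hq).2
    simp [dval, asymm h]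
  have hC : Multiset.map (dval f) (Multiset.filter (fun q : Fin N × Fin N => q.2 < q.1) u)
      = Multiset.map (fun q : Fin N × Fin N => -((f q.1 + f q.2) / 2))
          (Finset.univ.filter fun q : Fin N × Fin N => q.1 < q.2).val := by
    have emb2 : Finset.map ⟨Prod.swap, Prod.swap_injective⟩
        (Finset.univ.filter fun q : Fin N × Fin N => q.1 < q.2)
        = Finset.univ.filter fun q : Fin N × Fin N => q.2 < q.1 := by
      ext q
      simp only [Finset.mem_map, Finset.mem_filter, Finset.mem_univ, true_and,
        Function.Embedding.coeFn_mk]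
      constructor
      · rintro ⟨p, hp, rfl⟩; exact hp
      · intro h; exact ⟨q.swap, h, Prod.swap_swap q⟩
    have hv : (Finset.univ.filter fun q : Fin N × Fin N => q.2 < q.1).val
        = Multiset.filter (fun q : Fin N × Fin N => q.2 < q.1) u := Finset.filter_val _ _
    rw [← hv, ← emb2, Finset.map_val, Multiset.map_map]
    refine Multiset.map_congr rfl fun q hq => ?_
    have h : q.1 < q.2 := (Multiset.mem_filter.mp (Finset.mem_val.mpr hq)).2
    simp only [Function.comp_apply, Function.Embedding.coeFn_mk, dval,
      Prod.fst_swap, Prod.snd_swap, if_pos h]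
    ring
  calc Multiset.map (dval f) u
      = Multiset.map (dval f) (Multiset.filter (fun q : Fin N × Fin N => q.1 = q.2) u)
        + (Multiset.map (dval f) (Multiset.filter (fun q : Fin N × Fin N => q.1 < q.2) u)
        + Multiset.map (dval f) (Multiset.filter (fun q : Fin N × Fin N => q.2 < q.1) u)) := by
        rw [← Multiset.map_add, ← Multiset.map_add, e2, e1]
    _ = _ := by rw [hA, hB, hC, ← add_assoc]

end PdmAux

open PdmAux Polynomial

/-- The multiset of eigenvalues of the PDM `(1/2){ρ⊗𝟙, 𝒥[𝒰]}` of a density matrix `ρ`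
evolving under a unitary channel `𝒰` is `{λ₁,…,λₙ} ∪ {±(λᵢ+λⱼ)/2 : i < j}`. -/
theorem pdm_unitary_spectrum {N : ℕ} (ρ U : Matrix (Fin N) (Fin N) ℂ)
    (hρ : ρ.IsHermitian) (hρpos : ρ.PosSemidef) (hρtr : ρ.trace = 1)
    (hU : U * Uᴴ = 1) (hU' : Uᴴ * U = 1)
    (hR : (pdm (fun X => U * X * Uᴴ) ρ).IsHermitian) :
    Multiset.map hR.eigenvalues Finset.univ.val =
      Multiset.map hρ.eigenvalues Finset.univ.val
      + Multiset.map (fun q : Fin N × Fin N => (hρ.eigenvalues q.1 + hρ.eigenvalues q.2) / 2)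
          (Finset.univ.filter fun q : Fin N × Fin N => q.1 < q.2).val
      + Multiset.map (fun q : Fin N × Fin N => -((hρ.eigenvalues q.1 + hρ.eigenvalues q.2) / 2))
          (Finset.univ.filter fun q : Fin N × Fin N => q.1 < q.2).val := by
  classical
  set lam := hρ.eigenvalues with hlam
  set W : Matrix (Fin N) (Fin N) ℂ := (hρ.eigenvectorUnitary : Matrix (Fin N) (Fin N) ℂ) with hW
  have hW1 : W * Wᴴ = 1 := by
    have := (Matrix.mem_unitaryGroup_iff).mp (hρ.eigenvectorUnitary).2
    simpa [Matrix.star_eq_conjTranspose] using this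
  have hW2 : Wᴴ * W = 1 := by
    have := (Matrix.mem_unitaryGroup_iff').mp (hρ.eigenvectorUnitary).2
    simpa [Matrix.star_eq_conjTranspose] using this
  have hspec : ρ = W * Matrix.diagonal (fun i => ((lam i : ℝ) : ℂ)) * Wᴴ := by
    have := hρ.spectral_theorem
    rw [Unitary.conjStarAlgAut_apply, Matrix.star_eq_conjTranspose] at this
    exact this
  set V : Matrix (Fin N × Fin N) (Fin N × Fin N) ℂ := W ⊗ₖ (U * W) with hV
  have hUW1 : (U * W) * (U * W)ᴴ = 1 := by
    rw [Matrix.conjTranspose_mul, mul_assoc, ← mul_assoc W, hW1, one_mul, hU]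
  have hUW2 : (U * W)ᴴ * (U * W) = 1 := by
    rw [Matrix.conjTranspose_mul, mul_assoc, ← mul_assoc Uᴴ, hU', one_mul, hW2]
  have hV1 : V * Vᴴ = 1 := by
    rw [hV, conjTranspose_kron, ← Matrix.mul_kronecker_mul, hW1, hUW1,
      Matrix.one_kronecker_one]
  have hV2 : Vᴴ * V = 1 := by
    rw [hV, conjTranspose_kron, ← Matrix.mul_kronecker_mul, hW2, hUW2,
      Matrix.one_kronecker_one]
  -- ρ ⊗ 1 = V (Dk) Vᴴ
  set Dk : Matrix (Fin N × Fin N) (Fin N × Fin N) ℂ :=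
    Matrix.diagonal (fun p : Fin N × Fin N => ((lam p.1 : ℝ) : ℂ)) with hDk
  have hDkron : Dk = (Matrix.diagonal (fun i => ((lam i : ℝ) : ℂ))) ⊗ₖ (1 : Matrix (Fin N) (Fin N) ℂ) := by
    rw [hDk, ← Matrix.diagonal_one, Matrix.diagonal_kronecker_diagonal,
      show (fun mn : Fin N × Fin N => ((lam mn.1 : ℝ) : ℂ) * 1)
        = (fun p : Fin N × Fin N => ((lam p.1 : ℝ) : ℂ)) from funext fun p => mul_one _]
  have hrho1 : ρ ⊗ₖ (1 : Matrix (Fin N) (Fin N) ℂ) = V * Dk * Vᴴ := by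
    rw [hDkron, hV, conjTranspose_kron, ← Matrix.mul_kronecker_mul, ← Matrix.mul_kronecker_mul,
      ← hspec]
    congr 1
    rw [mul_one, hUW1]
  -- jam = V swm Vᴴ
  have hjam : jam (fun X => U * X * Uᴴ) = V * swm N * Vᴴ := by
    rw [jam_eq, hV, conjTranspose_kron, kron_mul_swm, mul_assoc, ← Matrix.mul_kronecker_mul,
      show U * W * Wᴴ = U from by rw [mul_assoc, hW1, mul_one],
      show W * (U * W)ᴴ = Uᴴ from by rw [Matrix.conjTranspose_mul, ← mul_assoc, hW1, one_mul]]
  -- pdm = V Mmid Vᴴ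
  have hVV : ∀ X : Matrix (Fin N × Fin N) (Fin N × Fin N) ℂ, Vᴴ * (V * X) = X := by
    intro X; rw [← mul_assoc, hV2, one_mul]
  have hpdm : pdm (fun X => U * X * Uᴴ) ρ
      = V * ((1/2 : ℂ) • (Dk * swm N + swm N * Dk)) * Vᴴ := by
    unfold pdm
    rw [hrho1, hjam]
    rw [Matrix.mul_smul, Matrix.smul_mul]
    congr 1
    rw [mul_add, add_mul]
    simp only [mul_assoc, hVV]
  -- Mmid = diagonal(mu) * swm
  set cmu : Fin N × Fin N → ℂ := fun p => (((lam p.1 + lam p.2) / 2 : ℝ) : ℂ) with hcmu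
  have hMmid : (1/2 : ℂ) • (Dk * swm N + swm N * Dk) = Matrix.diagonal cmu * swm N := by
    rw [hDk]
    ext p q
    simp only [Matrix.smul_apply, Matrix.add_apply, Matrix.diagonal_mul, Matrix.mul_diagonal,
      smul_eq_mul]
    by_cases h : p = (q.2, q.1)
    · subst h
      simp only [swm, Matrix.of_apply, if_pos rfl, hcmu, mul_one, one_mul]
      push_cast
      ring
    · simp [swm, h]
  -- the similarity
  set T : Matrix (Fin N × Fin N) (Fin N × Fin N) ℂ := V * Pm N with hT
  set Tinv : Matrix (Fin N × Fin N) (Fin N × Fin N) ℂ := Qm N * Vᴴ with hTinv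
  have hT1 : T * Tinv = 1 := by
    rw [hT, hTinv, mul_assoc, ← mul_assoc (Pm N), Pm_mul_Qm, one_mul, hV1]
  have hT2 : Tinv * T = 1 := by
    rw [hTinv, hT, mul_assoc, ← mul_assoc Vᴴ, hV2, one_mul, Qm_mul_Pm]
  have hsim : pdm (fun X => U * X * Uᴴ) ρ
      = T * Matrix.diagonal (fun q => ((dval lam q : ℝ) : ℂ)) * Tinv := by
    rw [hpdm, hMmid, hT, hTinv]
    have key := MP (N := N) lam
    rw [← hcmu] at key
    calc V * (Matrix.diagonal cmu * swm N) * Vᴴ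
        = V * (Matrix.diagonal cmu * swm N * (Pm N * Qm N)) * Vᴴ := by
          rw [Pm_mul_Qm, mul_one]
      _ = V * Pm N * Matrix.diagonal (fun q => ((dval lam q : ℝ) : ℂ)) * (Qm N * Vᴴ) := by
          rw [← mul_assoc (Matrix.diagonal cmu * swm N), key]
          simp only [mul_assoc]
  have hcp : (pdm (fun X => U * X * Uᴴ) ρ).charpoly
      = ∏ p, (X - C ((dval lam p : ℝ) : ℂ)) := by
    rw [hsim, charpoly_conj' _ _ _ hT1 hT2, charpoly_diagonal']
  have hmain := eig_multiset_eq hR (dval lam) hcp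
  rw [hmain, multiset_split]
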